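/- (Regularization.) Let m ≥ 2 be an integer and let y ∈ ℝ^m. Then there exists a nonempty subset A ⊆ {1,…,m} with comparable coordinates, i.e. |y(i)| ≤ 2|y(j)| for all i, j ∈ A, and with big energy: ‖y|_A‖₂ ≥ ‖y‖₂ / (2.5 √(log m)). -/

import Mathlib

open Finset

noncomputable section

/-- `restr A y = y|_A`: the vector equal to `y` on `A` and zero elsewhere. -/
def restr {m : ℕ} (A : Finset (Fin m)) (y : EuclideanSpace ℝ (Fin m)) :
    EuclideanSpace ℝ (Fin m) :=
  WithLp.toLp 2 (fun i => if i ∈ A then y i else 0)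

/-- Regularization lemma: every `y ∈ ℝ^m`, `m ≥ 2`, admits a nonempty subset `A` of
coordinates that are comparable (`|y(i)| ≤ 2|y(j)|` for `i, j ∈ A`) and carries a large
fraction of the energy: `‖y|_A‖₂ ≥ ‖y‖₂ / (2.5 √(log m))`. -/
theorem regularization {m : ℕ} (hm : 2 ≤ m) (y : EuclideanSpace ℝ (Fin m)) :
    ∃ A : Finset (Fin m), A.Nonempty ∧
      (∀ i ∈ A, ∀ j ∈ A, |y i| ≤ 2 * |y j|) ∧
      ‖y‖ / (2.5 * Real.sqrt (Real.log m)) ≤ ‖restr A y‖ := by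
  have hm0 : 0 < m := by omega
  by_cases hy : y = 0
  · refine ⟨{⟨0, hm0⟩}, singleton_nonempty _, ?_, ?_⟩
    · intro i hi j hj
      simp [hy]
    · have : ‖y‖ = 0 := by simp [hy]
      rw [this, zero_div]
      exact norm_nonneg _
  · -- main case
    obtain ⟨i0, hi0⟩ : ∃ i, y i ≠ 0 := by
      by_contra h
      push_neg at h
      exact hy (by ext i; exact h i)
    haveI : Nonempty (Fin m) := ⟨⟨0, hm0⟩⟩
    set M : ℝ := (univ : Finset (Fin m)).sup' univ_nonempty (fun i => |y i|) with hMdef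
    have hMle : ∀ i, |y i| ≤ M := by
      intro i
      rw [hMdef]
      exact le_sup' (fun j => |y j|) (mem_univ i)
    have hM0 : 0 < M := lt_of_lt_of_le (abs_pos.2 hi0) (hMle i0)
    set e : Fin m → ℝ := fun i => (y i)^2 with hedef
    have he0 : ∀ i, 0 ≤ e i := fun i => sq_nonneg _
    have hnorm_sq : ‖y‖^2 = ∑ i, e i := by
      rw [EuclideanSpace.norm_eq, Real.sq_sqrt (by positivity)]
      simp [hedef, sq_abs]
    have hrestr_sq : ∀ A : Finset (Fin m), ‖restr A y‖^2 = ∑ i ∈ A, e i := by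
      intro A
      rw [EuclideanSpace.norm_eq, Real.sq_sqrt (by positivity)]
      rw [← Finset.sum_filter_add_sum_filter_not univ (· ∈ A)]
      have h1 : ∀ i ∈ univ.filter (· ∈ A), ‖restr A y i‖^2 = e i := by
        intro i hi
        simp only [mem_filter] at hi
        simp [restr, hi.2, hedef, sq_abs]
      have h2 : ∀ i ∈ univ.filter (¬ · ∈ A), ‖restr A y i‖^2 = 0 := by
        intro i hi
        simp only [mem_filter] at hi
        simp [restr, hi.2]
      rw [Finset.sum_congr rfl h1, Finset.sum_congr rfl h2, Finset.sum_const_zero, add_zero]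
      congr 1
      ext i
      simp
    -- total energy positive
    have hE0 : 0 < ∑ i, e i := by
      rw [← hnorm_sq]
      have hyn : ‖y‖ ≠ 0 := norm_ne_zero_iff.2 hy
      positivity
    have hM2le : M^2 ≤ ∑ i, e i := by
      obtain ⟨i1, _, hi1⟩ := Finset.exists_mem_eq_sup' (univ_nonempty (α := Fin m)) (fun i => |y i|)
      have : M^2 = e i1 := by rw [hMdef, hi1]; simp [hedef, sq_abs]
      rw [this]
      exact Finset.single_le_sum (fun i _ => he0 i) (mem_univ i1)
    -- buckets
    set K : ℕ := Nat.clog 4 (2*m) with hKdef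
    have hK2m : 2*m ≤ 4^K := Nat.le_pow_clog (by norm_num) _
    have hK1 : 1 ≤ K := by
      by_contra h
      interval_cases K
      · omega
    have hKlow : 4^(K-1) < 2*m := Nat.pow_pred_clog_lt_self (by norm_num) (by omega)
    set b : Fin m → ℕ := fun i => ⌊Real.logb 2 (M/|y i|)⌋₊ with hbdef
    -- bucket bounds
    have hxge : ∀ i, y i ≠ 0 → (1:ℝ) ≤ M / |y i| := fun i hi =>
      (one_le_div (abs_pos.2 hi)).2 (hMle i)
    have hub : ∀ i, y i ≠ 0 → |y i| ≤ M / 2^(b i) := by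
      intro i hi
      have hx0 : 0 < M / |y i| := lt_of_lt_of_le one_pos (hxge i hi)
      have h1 : ((b i : ℝ)) ≤ Real.logb 2 (M/|y i|) :=
        Nat.floor_le (Real.logb_nonneg one_lt_two (hxge i hi))
      have h2 : (2:ℝ)^(b i) ≤ M/|y i| := by
        calc (2:ℝ)^(b i) = (2:ℝ)^((b i : ℝ)) := (Real.rpow_natCast 2 (b i)).symm
        _ ≤ (2:ℝ)^(Real.logb 2 (M/|y i|)) := Real.rpow_le_rpow_of_exponent_le one_le_two h1
        _ = M/|y i| := Real.rpow_logb two_pos (by norm_num) hx0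
      rw [le_div_iff₀ (by positivity)]
      calc |y i| * 2^(b i) ≤ |y i| * (M/|y i|) := by
            apply mul_le_mul_of_nonneg_left h2 (abs_nonneg _)
      _ = M := by field_simp
    have hlb : ∀ i, y i ≠ 0 → M / 2^(b i + 1) < |y i| := by
      intro i hi
      have hx0 : 0 < M / |y i| := lt_of_lt_of_le one_pos (hxge i hi)
      have h1 : Real.logb 2 (M/|y i|) < (b i : ℝ) + 1 := Nat.lt_floor_add_one _
      have h2 : M/|y i| < (2:ℝ)^(b i + 1) := by
        calc M/|y i| = (2:ℝ)^(Real.logb 2 (M/|y i|)) :=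
              (Real.rpow_logb two_pos (by norm_num) hx0).symm
        _ < (2:ℝ)^(((b i : ℝ)) + 1) := Real.rpow_lt_rpow_of_exponent_lt one_lt_two h1
        _ = (2:ℝ)^(b i + 1) := by
              rw [← Real.rpow_natCast 2 (b i + 1)]
              push_cast
              ring_nf
      rw [div_lt_iff₀ (by positivity)]
      have := (div_lt_iff₀ (abs_pos.2 hi)).1 h2
      linarith [mul_comm (|y i|) ((2:ℝ)^(b i + 1))]
    -- the buckets
    set S : ℕ → Finset (Fin m) := fun k => univ.filter (fun i => y i ≠ 0 ∧ b i = k) with hSdef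
    -- main energy count
    set U : Finset (Fin m) := univ.filter (fun i => y i ≠ 0 ∧ b i < K) with hUdef
    have hUsum : ∑ k ∈ range K, ∑ i ∈ S k, e i = ∑ i ∈ U, e i := by
      rw [← Finset.sum_fiberwise_of_maps_to (g := b) (t := range K)
        (fun i hi => mem_range.2 (by simp only [hUdef, mem_filter] at hi; exact hi.2.2)) e]
      apply Finset.sum_congr rfl
      intro k hk
      congr 1
      ext i
      simp only [hUdef, hSdef, mem_filter, mem_univ, true_and]
      constructor
      · rintro ⟨h1, h3⟩; exact ⟨⟨h1, h3 ▸ mem_range.1 hk⟩, h3⟩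
      · rintro ⟨⟨h1, _⟩, h3⟩; exact ⟨h1, h3⟩
    -- tail bound
    have htail : ∑ i ∈ univ.filter (fun i => ¬(y i ≠ 0 ∧ b i < K)), e i ≤ (∑ i, e i) / 2 := by
      have hbound : ∀ i ∈ univ.filter (fun i => ¬(y i ≠ 0 ∧ b i < K)), e i ≤ M^2 / 4^K := by
        intro i hi
        simp only [mem_filter, not_and, not_lt] at hi
        by_cases hzi : y i = 0
        · simp [hedef, hzi]; positivity
        · have hKb : K ≤ b i := hi.2 hzi
          have h1 : |y i| ≤ M / 2^(b i) := hub i hzi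
          have h2 : M / 2^(b i) ≤ M / 2^K := by
            apply div_le_div_of_nonneg_left hM0.le (by positivity)
            exact pow_le_pow_right₀ one_le_two hKb
          have h3 : |y i| ≤ M / 2^K := h1.trans h2
          have : e i = |y i|^2 := by simp [hedef, sq_abs]
          rw [this]
          calc |y i|^2 ≤ (M / 2^K)^2 := by
                apply pow_le_pow_left₀ (abs_nonneg _) h3
          _ = M^2 / 4^K := by
                have h24 : ((2:ℝ)^K)^2 = 4^K := by
                  rw [← pow_mul, show (4:ℝ) = 2^2 by norm_num, ← pow_mul, mul_comm]
                rw [div_pow, h24]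
      calc ∑ i ∈ univ.filter (fun i => ¬(y i ≠ 0 ∧ b i < K)), e i
          ≤ (univ.filter (fun i => ¬(y i ≠ 0 ∧ b i < K))).card • (M^2 / 4^K) :=
            Finset.sum_le_card_nsmul _ _ _ hbound
        _ ≤ m • (M^2 / 4^K) := by
            apply nsmul_le_nsmul_left (by positivity)
            calc (univ.filter (fun i => ¬(y i ≠ 0 ∧ b i < K))).card ≤ (univ : Finset (Fin m)).card :=
                  Finset.card_filter_le _ _
            _ = m := by simp
        _ = m * (M^2 / 4^K) := by simp [nsmul_eq_mul]
        _ ≤ M^2 / 2 := by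
            have h4 : (2*(m:ℝ)) ≤ 4^K := by exact_mod_cast hK2m
            have h5 : (0:ℝ) < 4^K := by positivity
            rw [← mul_div_assoc, div_le_div_iff₀ h5 two_pos]
            nlinarith [mul_le_mul_of_nonneg_right h4 (sq_nonneg M)]
        _ ≤ (∑ i, e i) / 2 := by linarith
    have hUge : (∑ i, e i) / 2 ≤ ∑ i ∈ U, e i := by
      have := Finset.sum_filter_add_sum_filter_not univ (fun i => y i ≠ 0 ∧ b i < K) e
      rw [hUdef]
      linarith
    -- pigeonhole
    have hpigeon : ∃ k ∈ range K, (∑ i, e i) / (2*K) ≤ ∑ i ∈ S k, e i := by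
      apply Finset.exists_le_of_sum_le ⟨0, mem_range.2 (by omega)⟩
      rw [Finset.sum_const, card_range, hUsum, nsmul_eq_mul]
      have hKpos : (0:ℝ) < K := by exact_mod_cast hK1
      calc (K : ℝ) * ((∑ i, e i) / (2*K)) = (∑ i, e i) / 2 := by
            field_simp
      _ ≤ ∑ i ∈ U, e i := hUge
    obtain ⟨k, hk, hkge⟩ := hpigeon
    have hKpos : (0:ℝ) < K := by exact_mod_cast hK1
    have hSk0 : (0:ℝ) < (∑ i, e i) / (2*K) := by positivity
    refine ⟨S k, ?_, ?_, ?_⟩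
    · -- nonempty
      by_contra h
      rw [not_nonempty_iff_eq_empty] at h
      rw [h, Finset.sum_empty] at hkge
      linarith
    · -- comparable
      intro i hi j hj
      simp only [hSdef, mem_filter] at hi hj
      have h1 : |y i| ≤ M / 2^k := hi.2.2 ▸ hub i hi.2.1
      have h2 : M / 2^(k+1) < |y j| := hj.2.2 ▸ hlb j hj.2.1
      have : M / 2^k = 2 * (M / 2^(k+1)) := by
        rw [pow_succ]
        field_simp
      linarith
    · -- energy
      set L : ℝ := Real.log m with hLdef
      have hL2 : Real.log 2 ≤ L := Real.log_le_log two_pos (by exact_mod_cast hm)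
      have hlog2 : (0.6931471803:ℝ) < Real.log 2 := Real.log_two_gt_d9
      have hLpos : 0 < L := by linarith
      -- 2K ≤ 6.25 L
      have hKbound : 2 * (K:ℝ) ≤ 6.25 * L := by
        have h1 : ((4:ℝ))^(K-1) < 2*m := by exact_mod_cast hKlow
        have h2 : ((K:ℝ)-1) * Real.log 4 ≤ Real.log (2*m) := by
          have := Real.log_le_log (by positivity) h1.le
          rwa [Real.log_pow, Nat.cast_sub hK1, Nat.cast_one] at this
        have h3 : Real.log (2*m) = Real.log 2 + L := by
          rw [Real.log_mul two_ne_zero (by positivity), hLdef]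
        have h4 : Real.log 4 = 2 * Real.log 2 := by
          rw [show (4:ℝ) = 2^2 by norm_num, Real.log_pow]
          push_cast; ring
        rw [h3, h4] at h2
        nlinarith [hlog2, hL2, hLpos]
      -- final
      have hconst : (2.5 * Real.sqrt L)^2 = 6.25 * L := by
        rw [mul_pow, Real.sq_sqrt hLpos.le]
        norm_num
      have hsqrtpos : 0 < 2.5 * Real.sqrt L := by positivity
      have hlhs_nonneg : 0 ≤ ‖y‖ / (2.5 * Real.sqrt L) := by positivity
      have hsq : (‖y‖ / (2.5 * Real.sqrt L))^2 ≤ ‖restr (S k) y‖^2 := by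
        rw [div_pow, hconst, hrestr_sq, hnorm_sq]
        calc (∑ i, e i) / (6.25 * L) ≤ (∑ i, e i) / (2*K) := by
              apply div_le_div_of_nonneg_left hE0.le (by positivity) hKbound
        _ ≤ ∑ i ∈ S k, e i := hkge
      have h := Real.sqrt_le_sqrt hsq
      rwa [Real.sqrt_sq hlhs_nonneg, Real.sqrt_sq (norm_nonneg _)] at h
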